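/- Let F : (0,∞) → ℝ be differentiable with σ_F(x) := sup_{y ≥ x} |F(y)| finite for all x > 0 and |F'| integrable on (0,∞); set σ_{1F}(x) := ∫_x^∞ σ_F(y) dy and σ_{2F}(x) := ∫_x^∞ |F'(y)| dy. Let 0 ≤ δ < 1 and x ≥ 0 be such that σ_{1F}(2x) ≤ δ. Suppose A(x,·) ∈ L¹(x,∞) satisfies the Marchenko equation A(x,y) + ∫_x^∞ A(x,t) F(t+y) dt = −F(x+y) for y ≥ x, is differentiable in y, and its derivative satisfies the differentiated equation A_y(x,y) + ∫_x^∞ A(x,s) F'(s+y) ds = −F'(x+y) for y ≥ x. Then ∫_x^∞ |A_y(x,y)| dy ≤ σ_{2F}(2x) · (1 + σ_{1F}(2x)/(1−δ)). -/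

import Mathlib

open MeasureTheory Set Filter

lemma map_shift_restrict (a c : ℝ) :
    Measure.map (· + c) (volume.restrict (Ioi a)) = volume.restrict (Ioi (a + c)) := by
  have h1 : (fun y : ℝ => y + c) ⁻¹' Ioi (a + c) = Ioi a := by
    rw [preimage_add_const_Ioi]; ring_nf
  rw [← h1, ← Measure.restrict_map (measurable_add_const c) measurableSet_Ioi,
    map_add_right_eq_self]

lemma lintegral_shift (a c : ℝ) {h : ℝ → ENNReal} (hh : Measurable h) :
    ∫⁻ y in Ioi a, h (y + c) = ∫⁻ z in Ioi (a + c), h z := by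
  rw [← map_shift_restrict a c, lintegral_map hh (measurable_add_const c)]

/-- `σ_F(x) := sup_{y ≥ x} |F(y)|`. -/
noncomputable def sigmaF (F : ℝ → ℝ) (x : ℝ) : ℝ :=
  sSup ((fun y => |F y|) '' Set.Ici x)

/-- bound on the `L¹` norm of the `y`-derivative of the Marchenko kernel:
`∫_x^∞ |A_y(x,y)| dy ≤ σ_{2F}(2x)·(1 + σ_{1F}(2x)/(1−δ))`. -/
theorem marchenko_Ay_L1_bound
    (F F' : ℝ → ℝ) (hFderiv : ∀ y > (0 : ℝ), HasDerivAt F (F' y) y)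
    (hFbdd : ∀ x > (0 : ℝ), BddAbove ((fun y => |F y|) '' Set.Ici x))
    (hF'int : IntegrableOn (fun y => |F' y|) (Set.Ioi 0))
    (δ : ℝ) (hδ0 : 0 ≤ δ) (hδ1 : δ < 1)
    (x : ℝ) (hx : 0 ≤ x)
    (hσint : IntegrableOn (sigmaF F) (Set.Ioi (2 * x)))
    (hsmall : (∫ y in Set.Ioi (2 * x), sigmaF F y) ≤ δ)
    (A Ay : ℝ → ℝ) (hAint : IntegrableOn A (Set.Ioi x))
    (heq : ∀ y ≥ x, A y + ∫ t in Set.Ioi x, A t * F (t + y) = -F (x + y))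
    (hAderiv : ∀ y ≥ x, HasDerivAt A (Ay y) y)
    (heq' : ∀ y ≥ x, Ay y + ∫ s in Set.Ioi x, A s * F' (s + y) = -F' (x + y)) :
    (∫ y in Set.Ioi x, |Ay y|) ≤
      (∫ y in Set.Ioi (2 * x), |F' y|) *
        (1 + (∫ y in Set.Ioi (2 * x), sigmaF F y) / (1 - δ)) := by
  have hσnonneg : ∀ y : ℝ, 0 ≤ sigmaF F y := fun y =>
    Real.sSup_nonneg (by rintro _ ⟨z, _, rfl⟩; exact abs_nonneg _)
  have h1δ : 0 < 1 - δ := by linarith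
  have hσ1_nonneg : (0:ℝ) ≤ ∫ y in Ioi (2*x), sigmaF F y := integral_nonneg fun y => hσnonneg y
  have hσ2_nonneg : (0:ℝ) ≤ ∫ y in Ioi (2*x), |F' y| := integral_nonneg fun y => abs_nonneg _
  have hRHS2 : (0:ℝ) ≤ 1 + (∫ y in Ioi (2*x), sigmaF F y) / (1 - δ) := by
    have := div_nonneg hσ1_nonneg h1δ.le; linarith
  by_cases hI : IntegrableOn (fun y => |Ay y|) (Ioi x) volume
  swap
  · rw [integral_undef hI]
    exact mul_nonneg hσ2_nonneg hRHS2
  -- notation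
  set σ1 : ℝ := ∫ y in Ioi (2*x), sigmaF F y with hσ1def
  set σ2 : ℝ := ∫ y in Ioi (2*x), |F' y| with hσ2def
  set c : ℝ := ∫ y in Ioi x, |A y| with hcdef
  have hAabs : IntegrableOn (fun y => |A y|) (Ioi x) volume := hAint.abs
  have hc0 : 0 ≤ c := integral_nonneg fun y => abs_nonneg _
  have hFle : ∀ {w z : ℝ}, 0 < w → w ≤ z → |F z| ≤ sigmaF F w := fun {w z} hw hwz =>
    le_csSup (hFbdd _ hw) ⟨z, hwz, rfl⟩
  -- translation facts for sigmaF
  have hmapx : Measure.map (· + x) (volume.restrict (Ioi x)) = volume.restrict (Ioi (2*x)) := by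
    rw [two_mul]; exact map_shift_restrict x x
  have hasm : AEStronglyMeasurable (sigmaF F) (Measure.map (· + x) (volume.restrict (Ioi x))) := by
    rw [hmapx]; exact hσint.1
  have hσshift_int : Integrable (fun y => sigmaF F (y + x)) (volume.restrict (Ioi x)) := by
    have h := (integrable_map_measure hasm (measurable_add_const x).aemeasurable).mp
      (by rw [hmapx]; exact hσint)
    exact h
  have hσshift_eq : ∫ y in Ioi x, sigmaF F (y + x) = σ1 := by
    have h := integral_map (μ := volume.restrict (Ioi x)) (φ := (· + x))
      (measurable_add_const x).aemeasurable hasm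
    rw [hmapx] at h
    exact h.symm
  -- Step A : bound on c
  have hAptw : ∀ᵐ y ∂(volume.restrict (Ioi x)), |A y| ≤ sigmaF F (y + x) * (1 + c) := by
    filter_upwards [ae_restrict_mem measurableSet_Ioi] with y hy
    have hy' : x < y := hy
    have hxy : 0 < x + y := by linarith
    have h0 := heq y hy'.le
    have hA_eq : A y = -F (x + y) - ∫ t in Ioi x, A t * F (t + y) := by linarith
    have habs : |A y| ≤ |F (x + y)| + |∫ t in Ioi x, A t * F (t + y)| := by
      rw [hA_eq, sub_eq_add_neg]
      simpa [abs_neg] using abs_add_le (-F (x + y)) (-(∫ t in Ioi x, A t * F (t + y)))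
    have hbound2 : |∫ t in Ioi x, A t * F (t + y)| ≤ c * sigmaF F (x + y) := by
      calc |∫ t in Ioi x, A t * F (t + y)| ≤ ∫ t in Ioi x, |A t| * |F (t + y)| := by
            simpa [Real.norm_eq_abs] using
              norm_integral_le_integral_norm (μ := volume.restrict (Ioi x))
                (fun t => A t * F (t + y))
        _ ≤ ∫ t in Ioi x, |A t| * sigmaF F (x + y) := by
            refine integral_mono_of_nonneg
              (Eventually.of_forall fun t => mul_nonneg (abs_nonneg _) (abs_nonneg _))
              (hAabs.mul_const _) ?_
            filter_upwards [ae_restrict_mem measurableSet_Ioi] with t ht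
            exact mul_le_mul_of_nonneg_left (hFle hxy (by have : x < t := ht; linarith))
              (abs_nonneg _)
        _ = c * sigmaF F (x + y) := integral_mul_const _ _
    calc |A y| ≤ |F (x + y)| + |∫ t in Ioi x, A t * F (t + y)| := habs
      _ ≤ sigmaF F (x + y) + c * sigmaF F (x + y) := add_le_add (hFle hxy le_rfl) hbound2
      _ = sigmaF F (y + x) * (1 + c) := by rw [add_comm x y]; ring
  have hc_le : c ≤ σ1 * (1 + c) := by
    calc c ≤ ∫ y in Ioi x, sigmaF F (y + x) * (1 + c) :=
        integral_mono_of_nonneg (Eventually.of_forall fun y => abs_nonneg _)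
          (hσshift_int.mul_const _) hAptw
      _ = (∫ y in Ioi x, sigmaF F (y + x)) * (1 + c) := integral_mul_const _ _
      _ = σ1 * (1 + c) := by rw [hσshift_eq]
  have hc : c ≤ σ1 / (1 - δ) := by
    rw [le_div_iff₀ h1δ]
    nlinarith [hc_le, hsmall, hc0, hσ1_nonneg]
  -- measurable representatives
  obtain ⟨G0, hG0sm, hG0ae⟩ := hF'int.aestronglyMeasurable
  set G : ℝ → ℝ := fun t => |G0 t| with hGdef
  have hGmeas : Measurable G := hG0sm.measurable.abs
  have hGnn : ∀ t, 0 ≤ G t := fun t => abs_nonneg _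
  have hGae : ∀ᵐ t ∂(volume : Measure ℝ), t ∈ Ioi (0:ℝ) → |F' t| = G t := by
    have h := (ae_restrict_iff' measurableSet_Ioi).mp hG0ae
    filter_upwards [h] with t ht h0
    have h1 : |F' t| = G0 t := ht h0
    simp [hGdef, ← h1, abs_abs]
  have hGshift : ∀ y : ℝ, x ≤ y →
      (∀ᵐ s ∂(volume.restrict (Ioi x)), |F' (s + y)| = G (s + y)) := by
    intro y hy
    have h2 : ∀ᵐ s ∂(volume : Measure ℝ), s + y ∈ Ioi (0:ℝ) → |F' (s + y)| = G (s + y) :=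
      (measurePreserving_add_right volume y).quasiMeasurePreserving.ae hGae
    refine (ae_restrict_iff' measurableSet_Ioi).mpr ?_
    filter_upwards [h2] with s hs hsx
    refine hs ?_
    have : x < s := hsx
    simp only [mem_Ioi]; linarith
  obtain ⟨A0, hA0sm, hA0ae⟩ := hAint.aestronglyMeasurable
  -- σ2 facts
  have hsub : Ioi (2*x) ⊆ Ioi (0:ℝ) := Ioi_subset_Ioi (by linarith)
  have hGae2x : (fun y => |F' y|) =ᵐ[volume.restrict (Ioi (2*x))] G := by
    refine (ae_restrict_iff' measurableSet_Ioi).mpr ?_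
    filter_upwards [hGae] with t ht h2
    exact ht (hsub h2)
  have hG2x_int : IntegrableOn G (Ioi (2*x)) volume := (hF'int.mono_set hsub).congr hGae2x
  have hofσ2 : ENNReal.ofReal σ2 = ∫⁻ y in Ioi (2*x), ENNReal.ofReal (G y) := by
    rw [hσ2def, integral_congr_ae hGae2x]
    exact ofReal_integral_eq_lintegral_ofReal hG2x_int (Eventually.of_forall fun t => hGnn t)
  have hofc : ENNReal.ofReal c = ∫⁻ s in Ioi x, ENNReal.ofReal (|A0 s|) := by
    rw [hcdef, ofReal_integral_eq_lintegral_ofReal hAabs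
      (Eventually.of_forall fun t => abs_nonneg _)]
    refine lintegral_congr_ae ?_
    filter_upwards [hA0ae] with s hs
    rw [hs]
  -- Step B pointwise
  have hAyptw : ∀ᵐ y ∂(volume.restrict (Ioi x)),
      ENNReal.ofReal (|Ay y|) ≤ ENNReal.ofReal (G (y + x)) +
        ∫⁻ s in Ioi x, ENNReal.ofReal (|A0 s|) * ENNReal.ofReal (G (s + y)) := by
    filter_upwards [ae_restrict_mem measurableSet_Ioi, hGshift x le_rfl] with y hy hGy
    have hy' : x < y := hy
    have h0 := heq' y hy'.le
    have hAy_eq : Ay y = -F' (x + y) - ∫ s in Ioi x, A s * F' (s + y) := by linarith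
    have habs : |Ay y| ≤ |F' (x + y)| + |∫ s in Ioi x, A s * F' (s + y)| := by
      rw [hAy_eq, sub_eq_add_neg]
      simpa [abs_neg] using abs_add_le (-F' (x + y)) (-(∫ s in Ioi x, A s * F' (s + y)))
    have step1 : ENNReal.ofReal (|Ay y|) ≤ ENNReal.ofReal (|F' (x + y)|) +
        ENNReal.ofReal (|∫ s in Ioi x, A s * F' (s + y)|) :=
      (ENNReal.ofReal_le_ofReal habs).trans ENNReal.ofReal_add_le
    have hterm1 : ENNReal.ofReal (|F' (x + y)|) = ENNReal.ofReal (G (y + x)) := by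
      rw [add_comm x y, hGy]
    have hterm2 : ENNReal.ofReal (|∫ s in Ioi x, A s * F' (s + y)|) ≤
        ∫⁻ s in Ioi x, ENNReal.ofReal (|A0 s|) * ENNReal.ofReal (G (s + y)) := by
      calc ENNReal.ofReal (|∫ s in Ioi x, A s * F' (s + y)|)
          ≤ ∫⁻ s in Ioi x, ENNReal.ofReal (|A s|) * ENNReal.ofReal (|F' (s + y)|) := by
            have h := enorm_integral_le_lintegral_enorm (μ := volume.restrict (Ioi x))
              (fun s => A s * F' (s + y))
            simpa [enorm_mul, Real.enorm_eq_ofReal_abs] using h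
        _ = ∫⁻ s in Ioi x, ENNReal.ofReal (|A0 s|) * ENNReal.ofReal (G (s + y)) := by
            refine lintegral_congr_ae ?_
            filter_upwards [hA0ae, hGshift y hy'.le] with s hsA hsG
            rw [hsA, hsG]
    refine step1.trans ?_
    rw [hterm1]
    exact add_le_add_right hterm2 _
  -- main chain
  have hofI : ENNReal.ofReal (∫ y in Ioi x, |Ay y|) = ∫⁻ y in Ioi x, ENNReal.ofReal (|Ay y|) :=
    ofReal_integral_eq_lintegral_ofReal hI (Eventually.of_forall fun y => abs_nonneg _)
  have hmeasH : Measurable (Function.uncurry fun (y s : ℝ) =>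
      ENNReal.ofReal (|A0 s|) * ENNReal.ofReal (G (s + y))) := by
    apply Measurable.mul (f := fun p : ℝ × ℝ => ENNReal.ofReal (|A0 p.2|))
      (g := fun p : ℝ × ℝ => ENNReal.ofReal (G (p.2 + p.1)))
    · exact ENNReal.measurable_ofReal.comp ((hA0sm.measurable.abs).comp measurable_snd)
    · exact ENNReal.measurable_ofReal.comp (hGmeas.comp (measurable_snd.add measurable_fst))
  have hswap : (∫⁻ y in Ioi x, ∫⁻ s in Ioi x,
        ENNReal.ofReal (|A0 s|) * ENNReal.ofReal (G (s + y))) =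
      ∫⁻ s in Ioi x, ∫⁻ y in Ioi x,
        ENNReal.ofReal (|A0 s|) * ENNReal.ofReal (G (s + y)) :=
    lintegral_lintegral_swap hmeasH.aemeasurable
  have hGmeas' : Measurable fun z : ℝ => ENNReal.ofReal (G z) :=
    ENNReal.measurable_ofReal.comp hGmeas
  have hinner : ∀ s, s ∈ Ioi x →
      (∫⁻ y in Ioi x, ENNReal.ofReal (|A0 s|) * ENNReal.ofReal (G (s + y))) ≤
        ENNReal.ofReal (|A0 s|) * ENNReal.ofReal σ2 := by
    intro s hs
    have hsx : x < s := hs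
    rw [lintegral_const_mul _ (by exact hGmeas'.comp (measurable_const_add s))]
    refine mul_le_mul_right ?_ _
    have heq2 : (∫⁻ y in Ioi x, ENNReal.ofReal (G (s + y))) =
        ∫⁻ z in Ioi (x + s), ENNReal.ofReal (G z) := by
      simp_rw [add_comm s]
      exact lintegral_shift x s hGmeas'
    rw [heq2, hofσ2]
    exact lintegral_mono_set (Ioi_subset_Ioi (by linarith))
  have hmain : (∫⁻ y in Ioi x, ENNReal.ofReal (|Ay y|)) ≤
      ENNReal.ofReal σ2 * ENNReal.ofReal (1 + c) := by
    calc ∫⁻ y in Ioi x, ENNReal.ofReal (|Ay y|)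
        ≤ ∫⁻ y in Ioi x, (ENNReal.ofReal (G (y + x)) +
            ∫⁻ s in Ioi x, ENNReal.ofReal (|A0 s|) * ENNReal.ofReal (G (s + y))) :=
          lintegral_mono_ae hAyptw
      _ = (∫⁻ y in Ioi x, ENNReal.ofReal (G (y + x))) +
          ∫⁻ y in Ioi x, ∫⁻ s in Ioi x,
            ENNReal.ofReal (|A0 s|) * ENNReal.ofReal (G (s + y)) :=
          lintegral_add_left (hGmeas'.comp (measurable_add_const x)) _
      _ = (∫⁻ z in Ioi (2*x), ENNReal.ofReal (G z)) +
          ∫⁻ s in Ioi x, ∫⁻ y in Ioi x,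
            ENNReal.ofReal (|A0 s|) * ENNReal.ofReal (G (s + y)) := by
          rw [lintegral_shift x x hGmeas', hswap, show x + x = 2*x from by ring]
      _ ≤ (∫⁻ z in Ioi (2*x), ENNReal.ofReal (G z)) +
          ∫⁻ s in Ioi x, ENNReal.ofReal (|A0 s|) * ENNReal.ofReal σ2 := by
          refine add_le_add_right (lintegral_mono_ae ?_) _
          filter_upwards [ae_restrict_mem measurableSet_Ioi] with s hs
          exact hinner s hs
      _ = ENNReal.ofReal σ2 + (∫⁻ s in Ioi x, ENNReal.ofReal (|A0 s|)) * ENNReal.ofReal σ2 := by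
          rw [← hofσ2, lintegral_mul_const _ hA0sm.measurable.abs.ennreal_ofReal]
      _ = ENNReal.ofReal σ2 + ENNReal.ofReal c * ENNReal.ofReal σ2 := by rw [← hofc]
      _ = ENNReal.ofReal σ2 * ENNReal.ofReal (1 + c) := by
          rw [ENNReal.ofReal_add zero_le_one hc0, ENNReal.ofReal_one, mul_add, mul_one,
            mul_comm (ENNReal.ofReal c)]
  have hIle : (∫ y in Ioi x, |Ay y|) ≤ σ2 * (1 + c) := by
    have h : ENNReal.ofReal (∫ y in Ioi x, |Ay y|) ≤ ENNReal.ofReal (σ2 * (1 + c)) := by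
      rw [hofI, ENNReal.ofReal_mul hσ2_nonneg]
      exact hmain
    exact (ENNReal.ofReal_le_ofReal_iff (mul_nonneg hσ2_nonneg (by linarith))).mp h
  calc (∫ y in Ioi x, |Ay y|) ≤ σ2 * (1 + c) := hIle
    _ ≤ σ2 * (1 + σ1 / (1 - δ)) :=
      mul_le_mul_of_nonneg_left (by linarith) hσ2_nonneg
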